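/- Let G = (V, E) be an undirected graph with vertex set V = [n]. For each edge e ∈ E let b_e ∈ {0,1}^n be the characteristic vector of V \ e (so (b_e)_i = 0 iff i ∈ e). Let μ be the uniform probability distribution on {0,1}^n, let B := { b_e : e ∈ E } ∪ {𝟙} where 𝟙 is the all-ones vector, and let c = 𝟙. Then E_μ[c_B] = (n − 2) + |{ U ⊆ [n] : U ∩ e ≠ ∅ for all e ∈ E }| / 2^{n−1}; equivalently, 2^{n−1} · (E_μ[c_B] − (n − 2)) equals the number of vertex covers of G. -/

import Mathlib

/-- The weight `μ_p({x}) = ∏_{i : x_i = 1} p_i · ∏_{i : x_i = 0} (1 − p_i)` of a point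
`x ∈ {0,1}^n` under the product Bernoulli measure `μ_p`. -/
noncomputable def bweight {n : ℕ} (p : Fin n → ℝ) (x : Fin n → Bool) : ℝ :=
  ∏ i, if x i then p i else 1 - p i

/-- The cost `cᵀb` of a binary vector `b ∈ {0,1}^n`. -/
noncomputable def bcost {n : ℕ} (c : Fin n → ℝ) (b : Fin n → Bool) : ℝ :=
  ∑ i, if b i then c i else 0

/-- `c_B(x) = min { cᵀb : b ∈ B, x ≤ b }` (with the convention `sInf ∅ = 0`;
for a Pareto cover the uncovered points have measure zero). -/
noncomputable def bmin {n : ℕ} (c : Fin n → ℝ) (B : Finset (Fin n → Bool)) (x : Fin n → Bool) : ℝ :=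
  sInf (bcost c '' {b | b ∈ B ∧ x ≤ b})

/-- `E_{μ_p}[c_B] = Σ_{x ∈ {0,1}^n} μ_p({x}) · c_B(x)`. -/
noncomputable def bexp {n : ℕ} (p c : Fin n → ℝ) (B : Finset (Fin n → Bool)) : ℝ :=
  ∑ x : Fin n → Bool, bweight p x * bmin c B x

-- `B` is a Pareto cover of `μ_p`: the covered points have total measure `1`.
open Classical in
noncomputable def bcover {n : ℕ} (p : Fin n → ℝ) (B : Finset (Fin n → Bool)) : Prop :=
  (∑ x : Fin n → Bool, if ∃ b ∈ B, x ≤ b then bweight p x else 0) = 1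

lemma cost_all {n : ℕ} : bcost (fun _ => (1:ℝ)) (fun _ : Fin n => true) = n := by
  simp [bcost]

lemma cost_edge {n : ℕ} (G : SimpleGraph (Fin n)) [DecidableRel G.Adj]
    {e : Sym2 (Fin n)} (he : e ∈ G.edgeFinset) :
    bcost (fun _ => (1:ℝ)) (fun i => decide (i ∉ e)) = (n:ℝ) - 2 := by
  classical
  have h2 : (Finset.univ.filter (fun i : Fin n => i ∈ e)).card = 2 := by
    induction e using Sym2.ind with
    | _ u v =>
      have hadj : G.Adj u v := by
        rw [SimpleGraph.mem_edgeFinset, SimpleGraph.mem_edgeSet] at he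
        exact he
      have hne : u ≠ v := G.ne_of_adj hadj
      have : Finset.univ.filter (fun i : Fin n => i ∈ s(u, v)) = {u, v} := by
        ext i; simp [Sym2.mem_iff]
      rw [this, Finset.card_pair hne]
  have hsum := Finset.card_filter_add_card_filter_not
    (s := (Finset.univ : Finset (Fin n))) (p := fun i : Fin n => i ∈ e)
  have : bcost (fun _ => (1:ℝ)) (fun i => decide (i ∉ e)) =
      ((Finset.univ.filter (fun i : Fin n => ¬ i ∈ e)).card : ℝ) := by
    simp [bcost, Finset.sum_ite, Finset.sum_const]
  rw [this]
  rw [Finset.card_univ, Fintype.card_fin] at hsum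
  have hn : (Finset.univ.filter (fun i : Fin n => ¬ i ∈ e)).card + 2 = n := by omega
  have := congrArg (fun k : ℕ => (k:ℝ)) hn
  push_cast at this
  linarith

lemma le_edge_iff {n : ℕ} (e : Sym2 (Fin n)) (x : Fin n → Bool) :
    x ≤ (fun i => decide (i ∉ e)) ↔ ∀ v ∈ e, x v = false := by
  constructor
  · intro h v hv
    cases hxv : x v with
    | false => rfl
    | true =>
      have h1 := h v
      rw [hxv] at h1
      simp [hv] at h1
      exact absurd h1 (by simp)
  · intro h i
    by_cases hi : i ∈ e
    · simp [h i hi]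
    · simp [hi]

open Classical in
lemma bmin_val {n : ℕ} (G : SimpleGraph (Fin n)) [DecidableRel G.Adj]
    (B : Finset (Fin n → Bool))
    (hB : B = insert (fun _ => true)
        (G.edgeFinset.image (fun e => fun i => decide (i ∉ e))))
    (x : Fin n → Bool) :
    bmin (fun _ => (1:ℝ)) B x =
      if ∃ e ∈ G.edgeFinset, ∀ v ∈ e, x v = false then (n:ℝ) - 2 else (n:ℝ) := by
  classical
  have hxtop : x ≤ (fun _ : Fin n => true) := fun i => Bool.le_true _
  have htopB : (fun _ : Fin n => true) ∈ B := by rw [hB]; exact Finset.mem_insert_self _ _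
  rw [bmin]
  split_ifs with hP
  · obtain ⟨e, he, hx⟩ := hP
    apply IsLeast.csInf_eq
    constructor
    · exact ⟨fun i => decide (i ∉ e),
        ⟨by rw [hB]; exact Finset.mem_insert_of_mem (Finset.mem_image_of_mem _ he),
          (le_edge_iff e x).mpr hx⟩, cost_edge G he⟩
    · rintro y ⟨b, ⟨hbB, -⟩, rfl⟩
      rw [hB] at hbB
      rcases Finset.mem_insert.mp hbB with rfl | hb
      · rw [cost_all]; linarith
      · obtain ⟨e', he', rfl⟩ := Finset.mem_image.mp hb
        rw [cost_edge G he']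
  · have hT : bcost (fun _ => (1:ℝ)) '' {b | b ∈ B ∧ x ≤ b} = {(n:ℝ)} := by
      ext y
      constructor
      · rintro ⟨b, ⟨hbB, hxb⟩, rfl⟩
        rw [hB] at hbB
        rcases Finset.mem_insert.mp hbB with rfl | hb
        · simp [cost_all]
        · obtain ⟨e', he', rfl⟩ := Finset.mem_image.mp hb
          exact absurd ⟨e', he', (le_edge_iff e' x).mp hxb⟩ hP
      · rintro rfl
        · exact ⟨fun _ => true, ⟨htopB, hxtop⟩, cost_all⟩
    rw [hT, csInf_singleton]

open Classical in
lemma count_eq {n : ℕ} (G : SimpleGraph (Fin n)) [DecidableRel G.Adj] :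
    (Finset.univ.filter (fun x : Fin n → Bool =>
        ∀ e ∈ G.edgeFinset, ∃ v ∈ e, x v = true)).card =
    (Finset.univ.filter
        (fun U : Finset (Fin n) => ∀ e ∈ G.edgeFinset, ∃ v ∈ U, v ∈ e)).card := by
  classical
  apply Finset.card_bij (fun x _ => Finset.univ.filter (fun v => x v = true))
  · intro x hx
    simp only [Finset.mem_filter, Finset.mem_univ, true_and] at hx ⊢
    intro e he
    obtain ⟨v, hv, hxv⟩ := hx e he
    exact ⟨v, by simp [hxv], hv⟩
  · intro x hx y hy h
    funext i
    have h1 := Finset.ext_iff.mp h i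
    simp only [Finset.mem_filter, Finset.mem_univ, true_and] at h1
    cases hxi : x i <;> cases hyi : y i <;> simp [hxi, hyi] at h1 ⊢
  · intro U hU
    refine ⟨fun v => decide (v ∈ U), ?_, ?_⟩
    · simp only [Finset.mem_filter, Finset.mem_univ, true_and] at hU ⊢
      intro e he
      obtain ⟨v, hv, hve⟩ := hU e he
      exact ⟨v, hve, by simp [hv]⟩
    · ext v; simp

open Classical in
theorem stmt3 {n : ℕ} (G : SimpleGraph (Fin n)) [DecidableRel G.Adj]
    (B : Finset (Fin n → Bool))
    (hB : B = insert (fun _ => true)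
        (G.edgeFinset.image (fun e => fun i => decide (i ∉ e)))) :
    bexp (fun _ => (1:ℝ)/2) (fun _ => (1:ℝ)) B =
        ((n:ℝ) - 2) +
          (((Finset.univ.filter
              (fun U : Finset (Fin n) => ∀ e ∈ G.edgeFinset, ∃ v ∈ U, v ∈ e)).card : ℝ) /
            (2:ℝ)^((n:ℤ) - 1)) ∧
    (2:ℝ)^((n:ℤ) - 1) * (bexp (fun _ => (1:ℝ)/2) (fun _ => (1:ℝ)) B - ((n:ℝ) - 2)) =
      ((Finset.univ.filter
          (fun U : Finset (Fin n) => ∀ e ∈ G.edgeFinset, ∃ v ∈ U, v ∈ e)).card : ℝ) := by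
  classical
  set V : ℝ := ((Finset.univ.filter
      (fun U : Finset (Fin n) => ∀ e ∈ G.edgeFinset, ∃ v ∈ U, v ∈ e)).card : ℝ) with hV
  have hw : ∀ x : Fin n → Bool, bweight (fun _ => (1:ℝ)/2) x = ((1:ℝ)/2)^n := by
    intro x
    rw [bweight]
    rw [Finset.prod_congr rfl (fun i _ => by split <;> norm_num :
      ∀ i ∈ Finset.univ, (if x i then (1:ℝ)/2 else 1 - 1/2) = 1/2)]
    rw [Finset.prod_const, Finset.card_univ, Fintype.card_fin]
  have hm := bmin_val G B hB
  have hQP : ∀ x : Fin n → Bool,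
      (¬ ∃ e ∈ G.edgeFinset, ∀ v ∈ e, x v = false) ↔
        (∀ e ∈ G.edgeFinset, ∃ v ∈ e, x v = true) := by
    intro x
    push_neg
    simp [Bool.not_eq_false]
  have key : bexp (fun _ => (1:ℝ)/2) (fun _ => (1:ℝ)) B
      = ((1:ℝ)/2)^n * (2^n * ((n:ℝ) - 2) + 2 * V) := by
    rw [bexp]
    have hterm : ∀ x : Fin n → Bool,
        bweight (fun _ => (1:ℝ)/2) x * bmin (fun _ => (1:ℝ)) B x
        = ((1:ℝ)/2)^n * (((n:ℝ) - 2) +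
            2 * (if (∀ e ∈ G.edgeFinset, ∃ v ∈ e, x v = true) then (1:ℝ) else 0)) := by
      intro x
      rw [hw x, hm x]
      by_cases hP : ∃ e ∈ G.edgeFinset, ∀ v ∈ e, x v = false
      · rw [if_pos hP, if_neg (by rw [← hQP, not_not]; exact hP)]
        ring
      · rw [if_neg hP, if_pos ((hQP x).mp hP)]
        ring
    rw [Finset.sum_congr rfl (fun x _ => hterm x), ← Finset.mul_sum]
    congr 1
    rw [Finset.sum_add_distrib, ← Finset.mul_sum, Finset.sum_boole, Finset.sum_const,
      Finset.card_univ, Fintype.card_fun, Fintype.card_bool, Fintype.card_fin]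
    rw [hV, count_eq G]
    ring
  have h2n : (2:ℝ)^n ≠ 0 := by positivity
  have hzp : (2:ℝ)^((n:ℤ) - 1) = 2^n / 2 := by
    rw [zpow_sub₀ (by norm_num : (2:ℝ) ≠ 0), zpow_one, zpow_natCast]
  have hhalf : ((1:ℝ)/2)^n = 1/2^n := by rw [div_pow, one_pow]
  constructor
  · rw [key, hzp, hhalf]
    field_simp
  · rw [key, hzp, hhalf]
    field_simp
    ring
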